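/- Symmetrization for balanced error: let R(h) be the population balanced error, R_n(h) the empirical balanced error on an i.i.d. sample of size n, and R'_n(h) the empirical balanced error on an independent ghost sample of size n. Assume the single-classifier deviation bound P[|R(h) − R'_n(h)| ≥ s] ≤ 6exp(−(s²/8)n·min_y P[Y=y]) for s ∈ (0,1). Then for any t > 0 with n t² ≥ 32·log(12)/min_{y∈{0,1}} P[Y=y], it holds that P[sup_{h∈H} (R(h) − R_n(h)) > t] ≤ 2·P[sup_{h∈H} (R'_n(h) − R_n(h)) > t/2]. -/

import Mathlib

open MeasureTheory
open scoped ENNReal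

/-- Symmetrization for the balanced error: if the single-classifier deviation bound
`P[|R(h) − R'_n(h)| ≥ s] ≤ 6·exp(−(s²/8)·n·min_y P[Y=y])` holds, then for any `t > 0`
with `n·t² ≥ 32·log 12 / min_y P[Y=y]` we have
`P[sup_h (R(h) − R_n(h)) > t] ≤ 2·P[sup_h (R'_n(h) − R_n(h)) > t/2]`. -/
theorem stmt_14 {Ω₁ Ω₂ : Type*} [MeasurableSpace Ω₁] [MeasurableSpace Ω₂]
    (μ₁ : Measure Ω₁) (μ₂ : Measure Ω₂)
    [IsProbabilityMeasure μ₁] [IsProbabilityMeasure μ₂]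
    {H : Type*} [Nonempty H]
    (n : ℕ) (p0 p1 : ℝ) (hp0 : 0 < p0) (hp1 : 0 < p1)
    (R : H → ℝ) (Rn : H → Ω₁ → ℝ) (R'n : H → Ω₂ → ℝ)
    (hRbd : ∀ h, 0 ≤ R h ∧ R h ≤ 1)
    (hRnbd : ∀ h ω₁, 0 ≤ Rn h ω₁ ∧ Rn h ω₁ ≤ 1)
    (hR'nbd : ∀ h ω₂, 0 ≤ R'n h ω₂ ∧ R'n h ω₂ ≤ 1)
    (hdev : ∀ (h : H) (s : ℝ), 0 < s → s < 1 →
      μ₂ {ω₂ | s ≤ |R h - R'n h ω₂|} ≤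
        ENNReal.ofReal (6 * Real.exp (-(s ^ 2 / 8) * n * min p0 p1)))
    (t : ℝ) (ht : 0 < t) (hnt : 32 * Real.log 12 / min p0 p1 ≤ n * t ^ 2) :
    (μ₁.prod μ₂) {ω | t < ⨆ h : H, (R h - Rn h ω.1)} ≤
      2 * (μ₁.prod μ₂) {ω | t / 2 < ⨆ h : H, (R'n h ω.2 - Rn h ω.1)} := by
  classical
  have hm0 : 0 < min p0 p1 := lt_min hp0 hp1
  by_cases ht1 : 1 ≤ t
  · have hempty : {ω : Ω₁ × Ω₂ | t < ⨆ h : H, (R h - Rn h ω.1)} = ∅ := by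
      ext ω
      simp only [Set.mem_setOf_eq, Set.mem_empty_iff_false, iff_false, not_lt]
      refine le_trans (ciSup_le fun h => ?_) ht1
      have h1 := (hRbd h).2
      have h2 := (hRnbd h ω.1).1
      linarith
    rw [hempty]
    simp
  push_neg at ht1
  -- the bad ghost event has probability at most 1/2
  have hhalf : ∀ h : H, μ₂ {ω₂ | t / 2 ≤ |R h - R'n h ω₂|} ≤ 1 / 2 := by
    intro h
    have h1 : (0:ℝ) < t / 2 := by linarith
    have h2 : t / 2 < 1 := by linarith
    refine (hdev h (t / 2) h1 h2).trans ?_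
    have hlog : Real.log 12 ≤ t ^ 2 / 32 * n * min p0 p1 := by
      rw [div_le_iff₀ hm0] at hnt
      nlinarith
    have hexp : Real.exp (-((t / 2) ^ 2 / 8) * n * min p0 p1) ≤ (12:ℝ)⁻¹ := by
      have : -((t / 2) ^ 2 / 8) * n * min p0 p1 ≤ -(Real.log 12) := by nlinarith
      calc Real.exp (-((t / 2) ^ 2 / 8) * n * min p0 p1)
          ≤ Real.exp (-(Real.log 12)) := Real.exp_le_exp.2 this
        _ = (12:ℝ)⁻¹ := by
            rw [Real.exp_neg, Real.exp_log]; norm_num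
    have h6 : 6 * Real.exp (-((t / 2) ^ 2 / 8) * n * min p0 p1) ≤ (1:ℝ) / 2 := by
      nlinarith
    calc ENNReal.ofReal (6 * Real.exp (-((t / 2) ^ 2 / 8) * n * min p0 p1))
        ≤ ENNReal.ofReal ((1:ℝ) / 2) := ENNReal.ofReal_le_ofReal h6
      _ = 1 / 2 := by
          rw [ENNReal.ofReal_div_of_pos (by norm_num)]
          norm_num
  set A : Set Ω₁ := {ω₁ | t < ⨆ h : H, (R h - Rn h ω₁)} with hA
  set B : Set (Ω₁ × Ω₂) := {ω | t / 2 < ⨆ h : H, (R'n h ω.2 - Rn h ω.1)} with hB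
  have hbdd1 : ∀ ω₁ : Ω₁, BddAbove (Set.range fun h => R h - Rn h ω₁) := by
    intro ω₁
    refine ⟨1, ?_⟩
    rintro x ⟨h, rfl⟩
    have h1 := (hRbd h).2
    have h2 := (hRnbd h ω₁).1
    simpa using by linarith
  have hbdd2 : ∀ ω : Ω₁ × Ω₂, BddAbove (Set.range fun h => R'n h ω.2 - Rn h ω.1) := by
    intro ω
    refine ⟨1, ?_⟩
    rintro x ⟨h, rfl⟩
    have h1 := (hR'nbd h ω.2).2
    have h2 := (hRnbd h ω.1).1
    simpa using by linarith
  set G : Set (Ω₁ × Ω₂) :=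
    {ω | ∃ h : H, t < R h - Rn h ω.1 ∧ |R h - R'n h ω.2| < t / 2} with hG
  have hGB : G ⊆ B := by
    rintro ω ⟨h, h1, h2⟩
    have h3 : R h - R'n h ω.2 < t / 2 := (abs_lt.1 h2).2
    have h4 : t / 2 < R'n h ω.2 - Rn h ω.1 := by linarith
    exact h4.trans_le (le_ciSup (hbdd2 ω) h)
  set U : Set (Ω₁ × Ω₂) := toMeasurable (μ₁.prod μ₂) G with hU
  have hUmeas : MeasurableSet U := measurableSet_toMeasurable _ _
  have hGU : G ⊆ U := subset_toMeasurable _ _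
  -- each section of U over A has measure at least 1/2
  have hsec : ∀ ω₁ ∈ A, (1:ℝ≥0∞) / 2 ≤ μ₂ (Prod.mk ω₁ ⁻¹' U) := by
    intro ω₁ hω₁
    obtain ⟨h, hh⟩ := (lt_ciSup_iff (hbdd1 ω₁)).1 hω₁
    have hsub : (Prod.mk ω₁ ⁻¹' U)ᶜ ⊆ {ω₂ | t / 2 ≤ |R h - R'n h ω₂|} := by
      intro ω₂ hω₂
      by_contra hc
      simp only [Set.mem_setOf_eq, not_le] at hc
      exact hω₂ (hGU ⟨h, hh, hc⟩)
    have hcompl : μ₂ ((Prod.mk ω₁ ⁻¹' U)ᶜ) ≤ 1 / 2 :=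
      (measure_mono hsub).trans (hhalf h)
    have hmeas : MeasurableSet (Prod.mk ω₁ ⁻¹' U) := measurable_prodMk_left hUmeas
    have hadd : μ₂ (Prod.mk ω₁ ⁻¹' U) + μ₂ ((Prod.mk ω₁ ⁻¹' U)ᶜ) = 1 := by
      rw [measure_add_measure_compl hmeas, measure_univ]
    have hone : (1:ℝ≥0∞) ≤ μ₂ (Prod.mk ω₁ ⁻¹' U) + 1 / 2 := by
      calc (1:ℝ≥0∞) = μ₂ (Prod.mk ω₁ ⁻¹' U) + μ₂ ((Prod.mk ω₁ ⁻¹' U)ᶜ) := hadd.symm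
        _ ≤ _ := add_le_add_right hcompl _
    have := tsub_le_iff_right.2 hone
    calc (1:ℝ≥0∞) / 2 = 1 - 1 / 2 := (ENNReal.sub_half ENNReal.one_ne_top).symm
      _ ≤ μ₂ (Prod.mk ω₁ ⁻¹' U) := this
  -- lower bound the product measure of B
  have key : (1:ℝ≥0∞) / 2 * μ₁ A ≤ (μ₁.prod μ₂) B := by
    have hf : Measurable fun ω₁ => μ₂ (Prod.mk ω₁ ⁻¹' U) :=
      measurable_measure_prodMk_left hUmeas
    have hS : MeasurableSet {ω₁ | (1:ℝ≥0∞) / 2 ≤ μ₂ (Prod.mk ω₁ ⁻¹' U)} :=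
      measurableSet_le measurable_const hf
    have hAS : A ⊆ {ω₁ | (1:ℝ≥0∞) / 2 ≤ μ₂ (Prod.mk ω₁ ⁻¹' U)} := hsec
    calc (1:ℝ≥0∞) / 2 * μ₁ A
        ≤ 1 / 2 * μ₁ {ω₁ | (1:ℝ≥0∞) / 2 ≤ μ₂ (Prod.mk ω₁ ⁻¹' U)} :=
          mul_le_mul_right (measure_mono hAS) _
      _ = ∫⁻ ω₁, Set.indicator {ω₁ | (1:ℝ≥0∞) / 2 ≤ μ₂ (Prod.mk ω₁ ⁻¹' U)}
            (fun _ => (1:ℝ≥0∞) / 2) ω₁ ∂μ₁ := by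
          rw [lintegral_indicator_const hS]
      _ ≤ ∫⁻ ω₁, μ₂ (Prod.mk ω₁ ⁻¹' U) ∂μ₁ := by
          refine lintegral_mono fun ω₁ => ?_
          by_cases hω : ω₁ ∈ {ω₁ | (1:ℝ≥0∞) / 2 ≤ μ₂ (Prod.mk ω₁ ⁻¹' U)}
          · rw [Set.indicator_of_mem hω]; exact hω
          · rw [Set.indicator_of_notMem hω]; exact zero_le
      _ = (μ₁.prod μ₂) U := (Measure.prod_apply hUmeas).symm
      _ = (μ₁.prod μ₂) G := measure_toMeasurable G
      _ ≤ (μ₁.prod μ₂) B := measure_mono hGB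
  -- the left-hand event is a product set
  have hLHS : {ω : Ω₁ × Ω₂ | t < ⨆ h : H, (R h - Rn h ω.1)} = A ×ˢ (Set.univ : Set Ω₂) := by
    ext ω
    simp [hA, Set.mem_prod]
  rw [hLHS, Measure.prod_prod, measure_univ, mul_one]
  calc μ₁ A = 2 * ((1:ℝ≥0∞) / 2 * μ₁ A) := by
        rw [← mul_assoc, one_div, ENNReal.mul_inv_cancel (by norm_num) (by norm_num), one_mul]
    _ ≤ 2 * (μ₁.prod μ₂) B := mul_le_mul_right key 2
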